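/- Let ψ : ℝⁿ ⇉ ℝⁿ satisfy the (Γ₁)-condition and V : ℝⁿ → ℝⁿ be L-Lipschitz continuous and η-strongly monotone. Let μ > 0 and ρ > 0 satisfy ‖P_{ψ(r)}(y) − P_{ψ(s)}(y)‖ ≤ ρ‖r − s‖ for all y, r, s ∈ ℝⁿ. Let x* be a solution of the inverse quasi-variational inequality problem. Then for all w ∈ ℝⁿ, ⟨V(w) − P_{ψ(w)}(V(w) − μw), w − x*⟩ ≥ (η − ρ − 1/2 − L²/2 − μ²/2 + μη) ‖w − x*‖². -/
import Mathlib


open scoped RealInnerProductSpace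
open MeasureTheory

/- Metric projection onto a set `C ⊆ ℝⁿ`: when `C` is nonempty, closed and convex this is
the unique nearest point of `C`. -/
open Classical in
noncomputable def metricProj {d : ℕ} (C : Set (EuclideanSpace ℝ (Fin d)))
    (x : EuclideanSpace ℝ (Fin d)) : EuclideanSpace ℝ (Fin d) :=
  if h : ∃ y, y ∈ C ∧ ∀ z ∈ C, ‖x - y‖ ≤ ‖x - z‖ then h.choose else x

lemma metricProj_spec {d : ℕ} {C : Set (EuclideanSpace ℝ (Fin d))} (hne : C.Nonempty)
    (hcl : IsClosed C) (x : EuclideanSpace ℝ (Fin d)) :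
    metricProj C x ∈ C ∧ ∀ z ∈ C, ‖x - metricProj C x‖ ≤ ‖x - z‖ := by
  have h : ∃ y, y ∈ C ∧ ∀ z ∈ C, ‖x - y‖ ≤ ‖x - z‖ := by
    obtain ⟨y, hy, hdy⟩ := hcl.exists_infDist_eq_dist hne x
    refine ⟨y, hy, fun z hz => ?_⟩
    rw [← dist_eq_norm, ← hdy, ← dist_eq_norm]
    exact Metric.infDist_le_dist_of_mem hz
  rw [metricProj, dif_pos h]
  exact h.choose_spec

lemma metricProj_char {d : ℕ} {C : Set (EuclideanSpace ℝ (Fin d))} (hne : C.Nonempty)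
    (hcl : IsClosed C) (hcv : Convex ℝ C) (x : EuclideanSpace ℝ (Fin d)) :
    ∀ z ∈ C, ⟪x - metricProj C x, z - metricProj C x⟫ ≤ 0 := by
  obtain ⟨hmem, hmin⟩ := metricProj_spec hne hcl x
  haveI : Nonempty C := hne.to_subtype
  have heq : ‖x - metricProj C x‖ = ⨅ w : C, ‖x - w‖ := by
    refine le_antisymm (le_ciInf fun w => hmin w w.2) ?_
    exact ciInf_le ⟨0, by rintro a ⟨w, rfl⟩; exact norm_nonneg _⟩ (⟨_, hmem⟩ : C)
  exact (norm_eq_iInf_iff_real_inner_le_zero hcv hmem).1 heq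

set_option maxHeartbeats 1000000 in
/-- If `x*` solves the IQVIP, then for all `w`,
`⟨V w − P_{ψ w}(V w − μ w), w − x*⟩ ≥ (η − ρ − 1/2 − L²/2 − μ²/2 + μη) ‖w − x*‖²`. -/
theorem stmt_8 {d : ℕ} (ψ : EuclideanSpace ℝ (Fin d) → Set (EuclideanSpace ℝ (Fin d)))
    (V : EuclideanSpace ℝ (Fin d) → EuclideanSpace ℝ (Fin d)) (L η μ ρ : ℝ)
    (hΓ₁ : ∀ x, (ψ x).Nonempty ∧ IsClosed (ψ x) ∧ Convex ℝ (ψ x))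
    (hL : ∀ y z, ‖V y - V z‖ ≤ L * ‖y - z‖)
    (hη : ∀ y z, η * ‖y - z‖ ^ 2 ≤ ⟪V y - V z, y - z⟫)
    (hμ : 0 < μ) (hρ : 0 < ρ)
    (hproj : ∀ y r s, ‖metricProj (ψ r) y - metricProj (ψ s) y‖ ≤ ρ * ‖r - s‖)
    (xs : EuclideanSpace ℝ (Fin d))
    (hxs : V xs ∈ ψ xs ∧ ∀ z ∈ ψ xs, 0 ≤ ⟪xs, z - V xs⟫) :
    ∀ w : EuclideanSpace ℝ (Fin d),
      (η - ρ - 1/2 - L^2/2 - μ^2/2 + μ*η) * ‖w - xs‖ ^ 2 ≤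
        ⟪V w - metricProj (ψ w) (V w - μ • w), w - xs⟫ := by
  intro w
  obtain ⟨hnexs, hclxs, hcvxs⟩ := hΓ₁ xs
  set b : EuclideanSpace ℝ (Fin d) := V w - μ • w with hb
  set a : EuclideanSpace ℝ (Fin d) := V xs - μ • xs with ha
  set P : EuclideanSpace ℝ (Fin d) := metricProj (ψ w) b with hP
  set Q : EuclideanSpace ℝ (Fin d) := metricProj (ψ xs) b with hQ
  have hQmem : Q ∈ ψ xs := (metricProj_spec hnexs hclxs b).1
  -- characterization of Q at point V xs
  have h1 : ⟪b - Q, V xs - Q⟫ ≤ 0 := metricProj_char hnexs hclxs hcvxs b (V xs) hxs.1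
  -- variational property of xs at Q
  have h2 : ⟪a - V xs, Q - V xs⟫ ≤ 0 := by
    have h0 : 0 ≤ ⟪xs, Q - V xs⟫ := hxs.2 Q hQmem
    have : a - V xs = (-μ) • xs := by rw [ha]; module
    rw [this, real_inner_smul_left]
    nlinarith
  -- cross inequality: ‖V xs - Q‖ ≤ ‖a - b‖
  set u : EuclideanSpace ℝ (Fin d) := V xs - Q with hu
  have hcross : ‖u‖ ^ 2 ≤ ⟪a - b, u⟫ := by
    have hexp : ⟪a - b, u⟫ = ⟪a - V xs, u⟫ + ⟪u, u⟫ + ⟪Q - b, u⟫ := by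
      rw [← inner_add_left, ← inner_add_left]
      congr 1
      rw [hu]; module
    have e1 : ⟪a - V xs, u⟫ ≥ 0 := by
      have : ⟪a - V xs, u⟫ = -⟪a - V xs, Q - V xs⟫ := by
        rw [← inner_neg_right]; congr 1; rw [hu]; module
      linarith [this ▸ neg_nonneg.mpr h2]
    have e2 : ⟪Q - b, u⟫ ≥ 0 := by
      have : ⟪Q - b, u⟫ = -⟪b - Q, V xs - Q⟫ := by
        rw [← inner_neg_left]; congr 1; module
      linarith [this ▸ neg_nonneg.mpr h1]
    have : ⟪u, u⟫ = ‖u‖ ^ 2 := real_inner_self_eq_norm_sq u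
    linarith [hexp, e1, e2, this.ge, this.le]
  have hule : ‖u‖ ≤ ‖a - b‖ := by
    have hcs : ⟪a - b, u⟫ ≤ ‖a - b‖ * ‖u‖ := real_inner_le_norm _ _
    rcases eq_or_lt_of_le (norm_nonneg u) with h0 | h0
    · rw [← h0]; exact norm_nonneg _
    · have : ‖u‖ * ‖u‖ ≤ ‖a - b‖ * ‖u‖ := by nlinarith
      exact le_of_mul_le_mul_right this h0
  -- bound ‖a - b‖²
  have hab : ‖a - b‖ ^ 2 ≤ (L^2 - 2*μ*η + μ^2) * ‖w - xs‖ ^ 2 := by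
    have habeq : a - b = (V xs - V w) - μ • (xs - w) := by rw [ha, hb]; module
    have hnorm : ‖a - b‖ ^ 2 = ‖V xs - V w‖ ^ 2 - 2 * (μ * ⟪V xs - V w, xs - w⟫)
        + μ^2 * ‖xs - w‖ ^ 2 := by
      rw [habeq, norm_sub_sq_real, real_inner_smul_right, norm_smul]
      rw [Real.norm_eq_abs]
      rw [mul_pow, sq_abs]
    have hLb : ‖V xs - V w‖ ^ 2 ≤ L^2 * ‖xs - w‖ ^ 2 := by
      have := hL xs w
      nlinarith [norm_nonneg (V xs - V w), norm_nonneg (xs - w)]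
    have hηb : η * ‖xs - w‖ ^ 2 ≤ ⟪V xs - V w, xs - w⟫ := hη xs w
    have hsymm : ‖xs - w‖ = ‖w - xs‖ := norm_sub_rev _ _
    rw [hnorm, hsymm]
    rw [hsymm] at hLb hηb
    nlinarith [hμ.le]
  -- three pieces
  have hsplit : ⟪V w - P, w - xs⟫ = ⟪V w - V xs, w - xs⟫ + ⟪u, w - xs⟫ + ⟪Q - P, w - xs⟫ := by
    rw [← inner_add_left, ← inner_add_left]
    congr 1
    rw [hu]; module
  have t1 : η * ‖w - xs‖ ^ 2 ≤ ⟪V w - V xs, w - xs⟫ := hη w xs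
  have t3 : -(ρ * ‖w - xs‖ ^ 2) ≤ ⟪Q - P, w - xs⟫ := by
    have hn : ‖Q - P‖ ≤ ρ * ‖xs - w‖ := hproj b xs w
    have hcs : -(‖Q - P‖ * ‖w - xs‖) ≤ ⟪Q - P, w - xs⟫ := by
      have := abs_real_inner_le_norm (Q - P) (w - xs)
      have := neg_abs_le ⟪Q - P, w - xs⟫
      linarith
    have hsymm : ‖xs - w‖ = ‖w - xs‖ := norm_sub_rev _ _
    rw [hsymm] at hn
    nlinarith [norm_nonneg (w - xs)]
  have t2 : -((‖u‖^2 + ‖w - xs‖^2)/2) ≤ ⟪u, w - xs⟫ := by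
    have hcs : -(‖u‖ * ‖w - xs‖) ≤ ⟪u, w - xs⟫ := by
      have := abs_real_inner_le_norm u (w - xs)
      have := neg_abs_le ⟪u, w - xs⟫
      linarith
    nlinarith [norm_nonneg u, norm_nonneg (w - xs), sq_nonneg (‖u‖ - ‖w - xs‖)]
  have hu2 : ‖u‖ ^ 2 ≤ (L^2 - 2*μ*η + μ^2) * ‖w - xs‖ ^ 2 := by
    have : ‖u‖ ^ 2 ≤ ‖a - b‖ ^ 2 := by nlinarith [norm_nonneg u, norm_nonneg (a - b)]
    linarith
  rw [hsplit]
  linarith [t1, t2, t3, hu2]
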